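/- arXiv:2212.03661 — 5 statements merged into one kernel-verified Lean document; each statement's English description precedes it below -/
import Mathlib

section
/- Let U₂ ⊆ ℂ \ {0} be open and connected, f₂ : U₂ → ℂ holomorphic with a fixed point z₂ ∈ U₂ satisfying f₂(z₂) = z₂ and |f₂'(z₂)| > 1. Let H : U₂ → ℂ be holomorphic of the form H(z) = A + B·f₂(z)/z with B ≠ 0. Suppose W ⊆ U₂ is an open neighborhood of z₂ with f₂(W) ⊆ U₂ and f₂(f₂(W)) ⊆ U₂, and H(f₂∘f₂(z)) = H(z) for all z ∈ W. Then a contradiction follows; i.e., no such H exists. -/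
/-- no holomorphic `H(z) = A + B·f₂(z)/z` with `B ≠ 0` can satisfy
`H ∘ f₂^{∘2} = H` near a repelling fixed point `z₂` of `f₂`. -/
theorem stmt9 (U₂ : Set ℂ) (hU₂ : IsOpen U₂) (hconn : IsConnected U₂)
    (h0 : (0 : ℂ) ∉ U₂) (f₂ : ℂ → ℂ) (hdiff : DifferentiableOn ℂ f₂ U₂)
    (z₂ : ℂ) (hz₂ : z₂ ∈ U₂) (hfix : f₂ z₂ = z₂)
    (hrep : 1 < ‖deriv f₂ z₂‖)
    (A B : ℂ) (hB : B ≠ 0) (H : ℂ → ℂ) (hH : ∀ z, H z = A + B * f₂ z / z)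
    (W : Set ℂ) (hW : IsOpen W) (hz₂W : z₂ ∈ W) (hWU : W ⊆ U₂)
    (hmaps : Set.MapsTo f₂ W U₂) (hmaps2 : Set.MapsTo (f₂ ∘ f₂) W U₂)
    (hinv : ∀ z ∈ W, H (f₂ (f₂ z)) = H z) :
    False := by
  have hz₂0 : z₂ ≠ 0 := fun h => h0 (h ▸ hz₂)
  set lam := deriv f₂ z₂ with hlam
  have hf : HasDerivAt f₂ lam z₂ :=
    (hdiff.differentiableAt (hU₂.mem_nhds hz₂)).hasDerivAt
  -- λ ≠ 1
  have hlam1 : lam ≠ 1 := by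
    intro h; rw [h] at hrep; simp at hrep
  -- λ² ≠ 1
  have hlamsq : lam * lam ≠ 1 := by
    intro h
    have := congrArg (‖·‖) h
    rw [norm_mul, norm_one] at this
    nlinarith [norm_nonneg lam]
  -- derivative of H at z₂
  have hHd : HasDerivAt H ((B * lam * z₂ - B * f₂ z₂ * 1) / z₂ ^ 2) z₂ := by
    have h1 : HasDerivAt (fun z => A + B * f₂ z / z)
        (0 + (B * lam * z₂ - B * f₂ z₂ * 1) / z₂ ^ 2) z₂ :=
      (hasDerivAt_const z₂ A).add (((hf.const_mul B).div (hasDerivAt_id z₂) hz₂0))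
    rw [zero_add] at h1
    exact h1.congr_of_eventuallyEq (Filter.Eventually.of_forall fun z => hH z)
  set D := (B * lam * z₂ - B * f₂ z₂ * 1) / z₂ ^ 2 with hD
  have hDne : D ≠ 0 := by
    rw [hD, hfix]
    intro h
    rw [div_eq_zero_iff] at h
    rcases h with h | h
    · apply hlam1
      have : B * z₂ * (lam - 1) = 0 := by ring_nf; ring_nf at h; linear_combination h
      rcases mul_eq_zero.mp this with h' | h'
      · exact absurd h' (mul_ne_zero hB hz₂0)
      · exact sub_eq_zero.mp h'
    · exact hz₂0 (pow_eq_zero_iff (n := 2) (by norm_num) |>.mp h)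
  -- derivative of f₂ ∘ f₂ at z₂
  have hff : HasDerivAt (f₂ ∘ f₂) (lam * lam) z₂ := by
    have hf2 : HasDerivAt f₂ lam (f₂ z₂) := by rw [hfix]; exact hf
    exact hf2.comp z₂ hf
  -- derivative of H ∘ (f₂ ∘ f₂) at z₂
  have hHf : HasDerivAt (H ∘ (f₂ ∘ f₂)) (D * (lam * lam)) z₂ := by
    have hHd' : HasDerivAt H D (( f₂ ∘ f₂) z₂) := by
      simp only [Function.comp, hfix]; exact hHd
    exact hHd'.comp z₂ hff
  -- H = H ∘ f₂ ∘ f₂ near z₂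
  have heq : H =ᶠ[nhds z₂] (H ∘ (f₂ ∘ f₂)) := by
    filter_upwards [hW.mem_nhds hz₂W] with z hz
    exact (hinv z hz).symm
  have hHd2 : HasDerivAt H (D * (lam * lam)) z₂ := hHf.congr_of_eventuallyEq heq
  have : D * (lam * lam) = D := hHd2.unique hHd
  have : D * (lam * lam - 1) = 0 := by ring_nf; linear_combination this
  rcases mul_eq_zero.mp this with h | h
  · exact hDne h
  · exact hlamsq (by linear_combination h)
end

section
/- Let U₂ ⊆ ℂ \ {0} be open and connected, f₂ : U₂ → ℂ holomorphic, z₂ ∈ U₂ with f₂(z₂) = z₂, λ₂ := f₂'(z₂), |λ₂| > 1, and a, b ∈ ℂ with a ≠ 0. Suppose on a neighborhood W of z₂ (with f₂(W) ⊆ U₂) we have a·b·f₂(z)/z + a·b·(f₂∘f₂)(z)/f₂(z) = c for some constant c ∈ ℂ. Then b = 0. -/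
/-- if `a·b·f₂(z)/z + a·b·f₂^{∘2}(z)/f₂(z)` is constant near a
repelling fixed point `z₂` of `f₂` and `a ≠ 0`, then `b = 0`. -/
theorem stmt10 (U₂ : Set ℂ) (hU₂ : IsOpen U₂) (hconn : IsConnected U₂)
    (h0 : (0 : ℂ) ∉ U₂) (f₂ : ℂ → ℂ) (hdiff : DifferentiableOn ℂ f₂ U₂)
    (z₂ : ℂ) (hz₂ : z₂ ∈ U₂) (hfix : f₂ z₂ = z₂)
    (lam₂ : ℂ) (hlam₂ : lam₂ = deriv f₂ z₂) (hrep : 1 < ‖lam₂‖)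
    (a b c : ℂ) (ha : a ≠ 0)
    (W : Set ℂ) (hW : IsOpen W) (hz₂W : z₂ ∈ W) (hWU : W ⊆ U₂)
    (hmaps : Set.MapsTo f₂ W U₂)
    (heq : ∀ z ∈ W, a * b * f₂ z / z + a * b * f₂ (f₂ z) / f₂ z = c) :
    b = 0 := by
  have hz₂0 : z₂ ≠ 0 := fun h => h0 (h ▸ hz₂)
  have hfz0 : f₂ z₂ ≠ 0 := by rw [hfix]; exact hz₂0
  have hf : HasDerivAt f₂ lam₂ z₂ := by
    rw [hlam₂]
    exact (hdiff.differentiableAt (hU₂.mem_nhds hz₂)).hasDerivAt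
  have hf' : HasDerivAt f₂ lam₂ (f₂ z₂) := by rw [hfix]; exact hf
  have hcomp : HasDerivAt (fun z => f₂ (f₂ z)) (lam₂ * lam₂) z₂ := hf'.comp z₂ hf
  have h1 : HasDerivAt (fun z => a * b * f₂ z / z)
      ((a * b * lam₂ * z₂ - a * b * f₂ z₂ * 1) / z₂ ^ 2) z₂ :=
    (hf.const_mul (a * b)).div (hasDerivAt_id z₂) hz₂0
  have h2 : HasDerivAt (fun z => a * b * f₂ (f₂ z) / f₂ z)
      ((a * b * (lam₂ * lam₂) * f₂ z₂ - a * b * f₂ (f₂ z₂) * lam₂) / f₂ z₂ ^ 2) z₂ :=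
    (hcomp.const_mul (a * b)).div hf hfz0
  have hsum := h1.add h2
  have hEq : (fun z => a * b * f₂ z / z + a * b * f₂ (f₂ z) / f₂ z)
      =ᶠ[nhds z₂] fun _ => c :=
    Filter.eventuallyEq_of_mem (hW.mem_nhds hz₂W) heq
  have hconst : HasDerivAt (fun z => a * b * f₂ z / z + a * b * f₂ (f₂ z) / f₂ z)
      (0 : ℂ) z₂ := (hasDerivAt_const z₂ c).congr_of_eventuallyEq hEq
  have hD := hsum.unique hconst
  simp only [hfix] at hD
  have hl1 : lam₂ ≠ 1 := by
    intro h; rw [h] at hrep; simp at hrep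
  have hlm1 : lam₂ ≠ -1 := by
    intro h; rw [h] at hrep; simp at hrep
  have key' : a * b * (lam₂ - 1) * (lam₂ + 1) * z₂ = 0 := by
    field_simp at hD
    linear_combination z₂ * hD
  have key : a * b * (lam₂ - 1) * (lam₂ + 1) = 0 :=
    (mul_eq_zero.mp key').resolve_right hz₂0
  have h2' : (lam₂ - 1) ≠ 0 := sub_ne_zero.mpr hl1
  have h3' : (lam₂ + 1) ≠ 0 := fun h => hlm1 (by linear_combination h)
  by_contra hb
  exact mul_ne_zero (mul_ne_zero (mul_ne_zero ha hb) h2') h3' (by linear_combination key)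
end

section
/- Let V ⊆ ℂ be a nonempty, hyperbolic, simply connected open set, and for i = 1, 2 let gᵢ : V → V be holomorphic with gᵢ(V) ⋐ V and g₁(V) ∩ g₂(V) = ∅. Then for every n ≥ 1, the map g₂ ∘ g₁^{∘(n−1)} : V → V has a unique fixed point wₙ, and wₙ ∈ g₂(V). Moreover, if f denotes the map with inverse branches g₁ and g₂ (i.e., f ∘ g₁ = id_V and f ∘ g₂ = id_V), then wₙ is a periodic point of f of exact period n. -/
open Set Metric Filter Function Topology

lemma lipAux {V : Set ℂ} {F : ℂ → ℂ} (hd : DifferentiableOn ℂ F V)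
    {M : ℝ} (hb : ∀ w ∈ V, ‖F w‖ ≤ M) {z : ℂ} {r : ℝ} (hr : 0 < r)
    (hball : ball z r ⊆ V) {x y : ℂ} (hx : x ∈ ball z (r/4)) (hy : y ∈ ball z (r/4)) :
    dist (F x) (F y) ≤ ((2*M+1)/(r/2)) * dist x y := by
  have hx' := mem_ball.1 hx
  have hy' := mem_ball.1 hy
  have hsub : ball x (r/2) ⊆ V := by
    intro w hw
    apply hball
    have hw' := mem_ball.1 hw
    exact mem_ball.2 (by
      calc dist w z ≤ dist w x + dist x z := dist_triangle _ _ _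
        _ < r/2 + r/4 := by gcongr
        _ ≤ r := by linarith)
  have hmaps : MapsTo F (ball x (r/2)) (ball (F x) (2*M+1)) := by
    intro w hw
    have h1 : ‖F w‖ ≤ M := hb _ (hsub hw)
    have h2 : ‖F x‖ ≤ M := hb _ (hsub (mem_ball_self (by linarith)))
    have : dist (F w) (F x) ≤ 2*M := by
      calc dist (F w) (F x) ≤ ‖F w‖ + ‖F x‖ := dist_le_norm_add_norm _ _
        _ ≤ 2*M := by linarith
    exact mem_ball.2 (by linarith)
  have hyx : y ∈ ball x (r/2) := mem_ball.2 (by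
    calc dist y x ≤ dist y z + dist z x := dist_triangle _ _ _
      _ < r/4 + r/4 := by rw [dist_comm z x]; gcongr
      _ ≤ r/2 := by linarith)
  have := Complex.dist_le_div_mul_dist_of_mapsTo_ball (hd.mono hsub) (hmaps.mono_right ball_subset_closedBall) hyx
  calc dist (F x) (F y) = dist (F y) (F x) := dist_comm _ _
    _ ≤ (2*M+1)/(r/2) * dist y x := this
    _ = (2*M+1)/(r/2) * dist x y := by rw [dist_comm]

/-- Earle–Hamilton-type fixed point theorem for a holomorphic self-map of a
connected open set in `ℂ` whose image is relatively compact in the set. -/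
theorem key_fixed_point {V : Set ℂ} (hV : IsOpen V) (hne : V.Nonempty)
    (hconn : IsPreconnected V) {h : ℂ → ℂ}
    (hd : DifferentiableOn ℂ h V) (hm : Set.MapsTo h V V)
    (hK : IsCompact (closure (h '' V))) (hKV : closure (h '' V) ⊆ V) :
    ∃ w ∈ V, h w = w ∧ ∀ w' ∈ V, h w' = w' → w' = w := by
  classical
  have hmn : ∀ n, Set.MapsTo h^[n] V V := fun n => hm.iterate n
  have hdn : ∀ n, DifferentiableOn ℂ h^[n] V := by
    intro n; induction n with
    | zero => simpa using differentiableOn_id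
    | succ n ih =>
      rw [Function.iterate_succ]
      exact ih.comp hd hm
  set S : ℕ → Set ℂ := fun n => h^[n+1] '' V with hS
  set K : ℕ → Set ℂ := fun n => closure (S n) with hKdef
  have hSsub : ∀ n, S n ⊆ h '' V := by
    rintro n _ ⟨z, hz, rfl⟩
    exact ⟨h^[n] z, hmn n hz, (Function.iterate_succ_apply' h n z).symm⟩
  have hSmono : ∀ n, S (n+1) ⊆ S n := by
    rintro n _ ⟨z, hz, rfl⟩
    exact ⟨h z, hm hz, (Function.iterate_succ_apply h (n+1) z).symm⟩
  have hSle : ∀ m n, m ≤ n → S n ⊆ S m := by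
    intro m n hmle
    induction n with
    | zero => intro x hx; simpa [Nat.le_zero.1 hmle] using hx
    | succ n ih =>
      rcases Nat.lt_or_ge m (n+1) with hlt | hge
      · exact (hSmono n).trans (ih (Nat.lt_succ_iff.1 hlt))
      · have : m = n+1 := le_antisymm hmle hge
        subst this; exact fun x hx => hx
  have hKcomp : ∀ n, IsCompact (K n) :=
    fun n => hK.of_isClosed_subset isClosed_closure (closure_mono (hSsub n))
  have hKV' : ∀ n, K n ⊆ V := fun n => (closure_mono (hSsub n)).trans hKV
  have hKne : ∀ n, (K n).Nonempty := fun n => ((hne.image _).closure)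
  have hKanti : ∀ n, K (n+1) ⊆ K n := fun n => closure_mono (hSmono n)
  set A : Set ℂ := ⋂ n, K n with hA
  have hAne : A.Nonempty :=
    IsCompact.nonempty_iInter_of_sequence_nonempty_isCompact_isClosed K hKanti hKne
      (hKcomp 0) (fun n => isClosed_closure)
  have hAV : A ⊆ V := (iInter_subset K 0).trans (hKV' 0)
  have hAcomp : IsCompact A :=
    (hKcomp 0).of_isClosed_subset (isClosed_iInter fun _ => isClosed_closure)
      (iInter_subset K 0)
  have himgK : ∀ n, h '' K n ⊆ K (n+1) := by
    intro n
    have hcont : ContinuousOn h (closure (S n)) := hd.continuousOn.mono (hKV' n)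
    refine (hcont.image_closure).trans (closure_mono ?_)
    rintro _ ⟨_, ⟨z, hz, rfl⟩, rfl⟩
    exact ⟨z, hz, (Function.iterate_succ_apply' h (n+1) z)⟩
  have hhA : h '' A ⊆ A := by
    rintro _ ⟨a, ha, rfl⟩
    rw [mem_iInter]
    intro n
    cases n with
    | zero => exact hKanti 0 (himgK 0 ⟨a, (mem_iInter.1 ha 0), rfl⟩)
    | succ m => exact himgK m ⟨a, mem_iInter.1 ha m, rfl⟩
  have hAh : A ⊆ h '' A := by
    intro a ha
    set C : ℕ → Set ℂ := fun n => K n ∩ h ⁻¹' {a} with hC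
    have hCclosed : ∀ n, IsClosed (C n) := fun n =>
      (hd.continuousOn.mono (hKV' n)).preimage_isClosed_of_isClosed isClosed_closure
        isClosed_singleton
    have hCne : ∀ n, (C n).Nonempty := by
      intro n
      have himg_compact : IsCompact (h '' K n) :=
        (hKcomp n).image_of_continuousOn (hd.continuousOn.mono (hKV' n))
      have hsub2 : S (n+1) ⊆ h '' K n := by
        rintro _ ⟨z, hz, rfl⟩
        exact ⟨h^[n+1] z, subset_closure ⟨z, hz, rfl⟩,
          (Function.iterate_succ_apply' h (n+1) z).symm⟩
      have haK : a ∈ K (n+1) := mem_iInter.1 ha (n+1)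
      have : a ∈ h '' K n := closure_minimal hsub2 himg_compact.isClosed haK
      obtain ⟨x, hxK, hxa⟩ := this
      exact ⟨x, hxK, by simp [hxa]⟩
    have hCanti : ∀ n, C (n+1) ⊆ C n := fun n => inter_subset_inter_left _ (hKanti n)
    obtain ⟨b, hb⟩ :=
      IsCompact.nonempty_iInter_of_sequence_nonempty_isCompact_isClosed C hCanti hCne
        ((hKcomp 0).of_isClosed_subset (hCclosed 0) inter_subset_left) hCclosed
    have hbA : b ∈ A := mem_iInter.2 fun n => (mem_iInter.1 hb n).1
    have hba : h b = a := by
      have := (mem_iInter.1 hb 0).2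
      simpa using this
    exact ⟨b, hbA, hba⟩
  have hAiter : ∀ n, A ⊆ h^[n+1] '' A := by
    intro n
    induction n with
    | zero => intro a ha; simpa using hAh ha
    | succ n ih =>
      intro a ha
      obtain ⟨b, hbA, hba⟩ := ih ha
      obtain ⟨c, hcA, hcb⟩ := hAh hbA
      exact ⟨c, hcA, by
        rw [Function.iterate_succ_apply h (n+1) c, hcb, hba]⟩
  -- uniform bound
  obtain ⟨x₀, hx₀K, hx₀max⟩ := (hKcomp 0).exists_isMaxOn (hKne 0) continuous_norm.continuousOn
  set M : ℝ := ‖x₀‖ with hM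
  have hM0 : 0 ≤ M := norm_nonneg _
  have hFb : ∀ n, ∀ z ∈ V, ‖h^[n+1] z‖ ≤ M := by
    intro n z hz
    exact hx₀max (subset_closure (hSle 0 n (Nat.zero_le n) ⟨z, hz, rfl⟩))
  -- ultrafilter
  set U : Ultrafilter ℕ := Ultrafilter.of (atTop : Filter ℕ) with hU
  have hUle : (U : Filter ℕ) ≤ atTop := Ultrafilter.of_le _
  have hφex : ∀ z ∈ V, ∃ x, x ∈ A ∧ Tendsto (fun n => h^[n+1] z) (U : Filter ℕ) (𝓝 x) := by
    intro z hz
    have hmem : ∀ n, h^[n+1] z ∈ K 0 :=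
      fun n => subset_closure (hSle 0 n (Nat.zero_le n) ⟨z, hz, rfl⟩)
    obtain ⟨x, hxK, hx⟩ := (hKcomp 0).ultrafilter_le_nhds
      (U.map (fun n => h^[n+1] z)) (by
        rw [Ultrafilter.coe_map, le_principal_iff, Filter.mem_map]
        exact Filter.univ_mem' hmem)
    rw [Ultrafilter.coe_map] at hx
    have htend : Tendsto (fun n => h^[n+1] z) (U : Filter ℕ) (𝓝 x) := hx
    refine ⟨x, ?_, htend⟩
    rw [mem_iInter]
    intro m
    refine isClosed_closure.mem_of_tendsto htend ?_
    refine ((eventually_ge_atTop m).filter_mono hUle).mono (fun n hn => ?_)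
    exact subset_closure (hSle m n hn ⟨z, hz, rfl⟩)
  set φ : ℂ → ℂ := fun z =>
    if hz : ∃ x, x ∈ A ∧ Tendsto (fun n => h^[n+1] z) (U : Filter ℕ) (𝓝 x)
    then hz.choose else 0 with hφ
  have hφA : ∀ z ∈ V, φ z ∈ A := by
    intro z hz
    rw [hφ]; simp only [dif_pos (hφex z hz)]
    exact (hφex z hz).choose_spec.1
  have hφt : ∀ z ∈ V, Tendsto (fun n => h^[n+1] z) (U : Filter ℕ) (𝓝 (φ z)) := by
    intro z hz
    rw [hφ]; simp only [dif_pos (hφex z hz)]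
    exact (hφex z hz).choose_spec.2
  -- locally uniform convergence
  have hTLU : TendstoLocallyUniformlyOn (fun n z => h^[n+1] z) φ (U : Filter ℕ) V := by
    rw [Metric.tendstoLocallyUniformlyOn_iff]
    intro ε hε x hx
    obtain ⟨r, hr, hrV⟩ := Metric.isOpen_iff.1 hV x hx
    set L : ℝ := (2*M+1)/(r/2) with hL
    have hLpos : 0 < L := by positivity
    have hb4V : ball x (r/4) ⊆ V := (ball_subset_ball (by linarith)).trans hrV
    have hlip : ∀ n, ∀ p ∈ ball x (r/4), ∀ q ∈ ball x (r/4),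
        dist (h^[n+1] p) (h^[n+1] q) ≤ L * dist p q :=
      fun n p hp q hq => lipAux (hdn (n+1)) (hFb n) hr hrV hp hq
    have hφlip : ∀ p ∈ ball x (r/4), ∀ q ∈ ball x (r/4),
        dist (φ p) (φ q) ≤ L * dist p q := by
      intro p hp q hq
      have hpV : p ∈ V := hb4V hp
      have hqV : q ∈ V := hb4V hq
      have htd : Tendsto (fun n => dist (h^[n+1] p) (h^[n+1] q)) (U : Filter ℕ)
          (𝓝 (dist (φ p) (φ q))) := (hφt p hpV).dist (hφt q hqV)
      exact le_of_tendsto htd (Eventually.of_forall fun n => hlip n p hp q hq)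
    set δ : ℝ := min (ε / (3 * (L+1))) (r/16) with hδdef
    have hδ : 0 < δ := lt_min (by positivity) (by linarith)
    have hcov : closedBall x (r/8) ⊆ ⋃ y : ℂ, ball y δ :=
      fun y _ => mem_iUnion.2 ⟨y, mem_ball_self hδ⟩
    obtain ⟨t, ht⟩ := (isCompact_closedBall x (r/8)).elim_finite_subcover
      (fun y : ℂ => ball y δ) (fun y => isOpen_ball) hcov
    have hev : ∀ᶠ n in (U : Filter ℕ), ∀ i ∈ (t : Set ℂ), i ∈ ball x (r/4) →
        dist (φ i) (h^[n+1] i) < ε/3 := by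
      rw [Filter.eventually_all_finite t.finite_toSet]
      intro i hi
      by_cases hgood : i ∈ ball x (r/4)
      · have hiV : i ∈ V := hb4V hgood
        have := Metric.tendsto_nhds.1 (hφt i hiV) (ε/3) (by positivity)
        exact this.mono fun n hn _ => by rw [dist_comm]; exact hn
      · exact Eventually.of_forall fun n hcon => absurd hcon hgood
    refine ⟨ball x (r/8), mem_nhdsWithin_of_mem_nhds (ball_mem_nhds x (by linarith)), ?_⟩
    refine hev.mono fun n hn y hy => ?_
    have hyc : y ∈ closedBall x (r/8) := ball_subset_closedBall hy
    obtain ⟨i, hit, hyi⟩ : ∃ i ∈ t, y ∈ ball i δ := by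
      have := ht hyc
      simpa using this
    have hyb4 : y ∈ ball x (r/4) := by
      have := mem_ball.1 hy
      exact mem_ball.2 (by linarith)
    have hib4 : i ∈ ball x (r/4) := by
      have h1 : dist y i < δ := mem_ball.1 hyi
      have h2 : dist y x < r/8 := mem_ball.1 hy
      have h3 : δ ≤ r/16 := min_le_right _ _
      refine mem_ball.2 ?_
      calc dist i x ≤ dist i y + dist y x := dist_triangle _ _ _
        _ < r/16 + r/8 := by
            rw [dist_comm i y]; exact add_lt_add_of_le_of_lt (by linarith) h2
        _ < r/4 := by linarith
    have hLδ : L * δ < ε/3 := by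
      have h1 : δ ≤ ε / (3 * (L+1)) := min_le_left _ _
      have h2 : L * δ ≤ L * (ε / (3 * (L+1))) := by
        exact mul_le_mul_of_nonneg_left h1 hLpos.le
      have h3 : L * (ε / (3 * (L+1))) < ε/3 := by
        have hL1 : (0:ℝ) < L + 1 := by linarith
        have heq : L * (ε / (3 * (L+1))) = ε/3 * (L/(L+1)) := by
          field_simp
        rw [heq]
        have hlt : L/(L+1) < 1 := (div_lt_one hL1).2 (by linarith)
        calc ε/3 * (L/(L+1)) < ε/3 * 1 := mul_lt_mul_of_pos_left hlt (by positivity)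
          _ = ε/3 := mul_one _
      linarith
    have hdyi : dist y i < δ := mem_ball.1 hyi
    calc dist (φ y) (h^[n+1] y)
        ≤ dist (φ y) (φ i) + dist (φ i) (h^[n+1] i) + dist (h^[n+1] i) (h^[n+1] y) :=
          dist_triangle4 _ _ _ _
      _ < L * δ + ε/3 + L * δ := by
          have e1 : dist (φ y) (φ i) ≤ L * dist y i := hφlip y hyb4 i hib4
          have e2 : dist (h^[n+1] i) (h^[n+1] y) ≤ L * dist i y := hlip n i hib4 y hyb4
          have e3 : dist (φ i) (h^[n+1] i) < ε/3 := hn i (Finset.mem_coe.2 hit) hib4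
          have e4 : L * dist y i ≤ L * δ := by
            apply mul_le_mul_of_nonneg_left hdyi.le hLpos.le
          have e5 : L * dist i y ≤ L * δ := by
            rw [dist_comm]; exact e4
          linarith
      _ < ε := by linarith
  have hφd : DifferentiableOn ℂ φ V :=
    hTLU.differentiableOn (Eventually.of_forall fun n => hdn (n+1)) hV
  have hAφ : A ⊆ φ '' A := by
    intro a ha
    have hbex : ∀ n : ℕ, ∃ b, b ∈ A ∧ h^[n+1] b = a := by
      intro n
      obtain ⟨b, hbA, hba⟩ := hAiter n ha
      exact ⟨b, hbA, hba⟩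
    choose b hbA hba using hbex
    obtain ⟨binf, hbinfA, hbinf⟩ := hAcomp.ultrafilter_le_nhds (U.map b) (by
      rw [Ultrafilter.coe_map, le_principal_iff, Filter.mem_map]
      exact Filter.univ_mem' hbA)
    rw [Ultrafilter.coe_map] at hbinf
    have hbt : Tendsto b (U : Filter ℕ) (𝓝 binf) := hbinf
    have hbinfV : binf ∈ V := hAV hbinfA
    have hTU : TendstoUniformlyOn (fun n z => h^[n+1] z) φ (U : Filter ℕ) A :=
      (tendstoLocallyUniformlyOn_iff_tendstoUniformlyOn_of_compact hAcomp).1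
        (hTLU.mono hAV)
    have h1 : Tendsto (fun n => φ (b n)) (U : Filter ℕ) (𝓝 (φ binf)) :=
      ((hφd.continuousOn.continuousAt (hV.mem_nhds hbinfV)).tendsto).comp hbt
    have h3 : Tendsto (fun n => h^[n+1] (b n)) (U : Filter ℕ) (𝓝 (φ binf)) := by
      rw [Metric.tendsto_nhds]
      intro ε hε
      have e1 : ∀ᶠ n in (U : Filter ℕ), ∀ y ∈ A, dist (φ y) (h^[n+1] y) < ε/2 :=
        (Metric.tendstoUniformlyOn_iff.1 hTU) (ε/2) (by positivity)
      have e2 : ∀ᶠ n in (U : Filter ℕ), dist (φ (b n)) (φ binf) < ε/2 :=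
        Metric.tendsto_nhds.1 h1 (ε/2) (by positivity)
      filter_upwards [e1, e2] with n hn1 hn2
      calc dist (h^[n+1] (b n)) (φ binf)
          ≤ dist (h^[n+1] (b n)) (φ (b n)) + dist (φ (b n)) (φ binf) := dist_triangle _ _ _
        _ < ε/2 + ε/2 := by
            refine add_lt_add_of_lt_of_lt ?_ hn2
            rw [dist_comm]; exact hn1 (b n) (hbA n)
        _ = ε := by ring
    have h4 : Tendsto (fun _ : ℕ => a) (U : Filter ℕ) (𝓝 (φ binf)) := by
      have : (fun n : ℕ => h^[n+1] (b n)) = fun _ : ℕ => a := funext fun n => hba n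
      rwa [this] at h3
    have : φ binf = a := tendsto_nhds_unique h4 tendsto_const_nhds
    exact ⟨binf, hbinfA, this⟩
  -- maximum modulus principle forces φ to be constant
  obtain ⟨amax, hamaxA, hamax⟩ := hAcomp.exists_isMaxOn hAne continuous_norm.continuousOn
  obtain ⟨c, hcA, hc⟩ := hAφ hamaxA
  have hcV : c ∈ V := hAV hcA
  have hmax : IsMaxOn (norm ∘ φ) V c := by
    intro z hz
    have h1 : ‖φ z‖ ≤ ‖amax‖ := hamax (hφA z hz)
    simpa [hc] using h1
  have heq := Complex.eqOn_of_isPreconnected_of_isMaxOn_norm hconn hV hφd hcV hmax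
  set w : ℂ := φ c with hw
  have hwA : w ∈ A := hφA c hcV
  have hAsing : ∀ a ∈ A, a = w := by
    intro a ha
    obtain ⟨b, hbA, hba⟩ := hAφ ha
    have := heq (hAV hbA)
    simp only [Function.const_apply] at this
    rw [← hba, this]
  have hwV : w ∈ V := hAV hwA
  have hhw : h w = w := hAsing (h w) (hhA ⟨w, hwA, rfl⟩)
  refine ⟨w, hwV, hhw, ?_⟩
  intro w' hw'V hw'
  have hw'A : w' ∈ A := by
    rw [mem_iInter]
    intro n
    exact subset_closure ⟨w', hw'V, Function.iterate_fixed hw' (n+1)⟩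
  exact hAsing w' hw'A

/-- for an escaping quadratic-like map with inverse branches
`g₁, g₂` on a hyperbolic simply connected `V`, `g₂ ∘ g₁^{∘(n−1)}` has a unique
fixed point `wₙ ∈ g₂(V)`, which is a periodic point of `f` of exact period `n`. -/
theorem stmt14 (V : Set ℂ) (hV : IsOpen V) (hne : V.Nonempty)
    (hhyp : ∃ p q : ℂ, p ≠ q ∧ p ∉ V ∧ q ∉ V)
    (hsc : SimplyConnectedSpace V)
    (g₁ g₂ : ℂ → ℂ)
    (hd₁ : DifferentiableOn ℂ g₁ V) (hd₂ : DifferentiableOn ℂ g₂ V)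
    (hm₁ : Set.MapsTo g₁ V V) (hm₂ : Set.MapsTo g₂ V V)
    (hc₁ : IsCompact (closure (g₁ '' V)) ∧ closure (g₁ '' V) ⊆ V)
    (hc₂ : IsCompact (closure (g₂ '' V)) ∧ closure (g₂ '' V) ⊆ V)
    (hdisj : Disjoint (g₁ '' V) (g₂ '' V))
    (f : ℂ → ℂ) (hf₁ : ∀ z ∈ V, f (g₁ z) = z) (hf₂ : ∀ z ∈ V, f (g₂ z) = z) :
    ∀ n : ℕ, 1 ≤ n → ∃ w : ℂ,
      (w ∈ V ∧ g₂ (g₁^[n - 1] w) = w) ∧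
      (∀ w', w' ∈ V ∧ g₂ (g₁^[n - 1] w') = w' → w' = w) ∧
      w ∈ g₂ '' V ∧ f^[n] w = w ∧ ∀ m, 1 ≤ m → m < n → f^[m] w ≠ w := by
  intro n hn
  set k : ℕ := n - 1 with hk
  have hnk : n = k + 1 := (Nat.succ_pred_eq_of_pos hn).symm
  -- connectivity
  have hconn : IsPreconnected V := by
    haveI := hsc
    have : IsPathConnected V := isPathConnected_iff_pathConnectedSpace.2 inferInstance
    exact this.isConnected.isPreconnected
  -- the map h = g₂ ∘ g₁^[k]
  set h : ℂ → ℂ := fun z => g₂ (g₁^[k] z) with hh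
  have hm1k : Set.MapsTo g₁^[k] V V := hm₁.iterate k
  have hd1k : DifferentiableOn ℂ g₁^[k] V := by
    induction k with
    | zero => simpa using differentiableOn_id
    | succ m ih =>
      rw [Function.iterate_succ]
      exact ih.comp hd₁ hm₁
  have hdh : DifferentiableOn ℂ h V := hd₂.comp hd1k hm1k
  have hmh : Set.MapsTo h V V := fun z hz => hm₂ (hm1k hz)
  have hhsub : h '' V ⊆ g₂ '' V := by
    rintro _ ⟨z, hz, rfl⟩
    exact ⟨g₁^[k] z, hm1k hz, rfl⟩
  have hKcomp : IsCompact (closure (h '' V)) :=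
    hc₂.1.of_isClosed_subset isClosed_closure (closure_mono hhsub)
  have hKV : closure (h '' V) ⊆ V := (closure_mono hhsub).trans hc₂.2
  obtain ⟨w, hwV, hwfix, huniq⟩ := key_fixed_point hV hne hconn hdh hmh hKcomp hKV
  have hwfix' : g₂ (g₁^[n-1] w) = w := by rw [← hk]; exact hwfix
  have hiterV : ∀ j, g₁^[j] w ∈ V := fun j => hm₁.iterate j hwV
  -- orbit computation: f^[j+1] w = g₁^[k-j] w for j ≤ k
  have horbit : ∀ j, j ≤ k → f^[j+1] w = g₁^[k-j] w := by
    intro j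
    induction j with
    | zero =>
      intro _
      simp only [Function.iterate_one, Nat.sub_zero]
      conv_lhs => rw [← hwfix]
      exact hf₂ _ (hiterV k)
    | succ m ih =>
      intro hm
      have hm' : m ≤ k := Nat.le_of_succ_le hm
      have e1 : k - m = (k - (m+1)) + 1 := by omega
      rw [Function.iterate_succ_apply', ih hm', e1, Function.iterate_succ_apply']
      exact hf₁ _ (hiterV (k - (m+1)))
  have hfn : f^[n] w = w := by
    have := horbit k le_rfl
    simpa [hnk] using this
  refine ⟨w, ⟨hwV, hwfix'⟩, ?_, ?_, hfn, ?_⟩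
  · rintro w' ⟨hw'V, hw'fix⟩
    refine huniq w' hw'V ?_
    show g₂ (g₁^[k] w') = w'
    exact hw'fix
  · exact ⟨g₁^[k] w, hiterV k, hwfix'⟩
  · intro m hm1 hmn
    have hmk : m - 1 ≤ k := by omega
    have hmform : m = (m-1) + 1 := by omega
    have horb : f^[m] w = g₁^[k-(m-1)] w := by
      conv_lhs => rw [hmform]
      exact horbit (m-1) hmk
    have hpos : 1 ≤ k - (m-1) := by omega
    have hform2 : k - (m-1) = (k - (m-1) - 1) + 1 := by omega
    have hmem1 : f^[m] w ∈ g₁ '' V := by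
      rw [horb, hform2, Function.iterate_succ_apply']
      exact ⟨g₁^[k-(m-1)-1] w, hiterV _, rfl⟩
    have hmem2 : w ∈ g₂ '' V := ⟨g₁^[k] w, hiterV k, hwfix'⟩
    intro hcon
    rw [hcon] at hmem1
    exact (Set.disjoint_left.1 hdisj hmem1) hmem2
end

section
/- Let λ ∈ ℂ with |λ| > 1 and b ∈ ℂ, and suppose (εₙ)ₙ is a sequence of complex numbers with εₙ → 0 such that (λ−1)·b + λ·εₙ − εₙ₊₁ belongs to a fixed closed discrete subset Λ ⊆ ℂ for all n. Then (λ−1)·b ∈ Λ, and εₙ = 0 for all sufficiently large n. -/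
/-- if `εₙ → 0`, `|λ| > 1` and `(λ−1)b + λεₙ − εₙ₊₁` lies in a
closed discrete `Λ ⊆ ℂ` for all `n`, then `(λ−1)b ∈ Λ` and `εₙ = 0` eventually. -/
theorem stmt18 (Λ : Set ℂ) (hΛclosed : IsClosed Λ) (hΛdisc : DiscreteTopology Λ)
    (lam b : ℂ) (hlam : 1 < ‖lam‖)
    (ε : ℕ → ℂ) (hconv : Filter.Tendsto ε Filter.atTop (nhds 0))
    (hmem : ∀ n, (lam - 1) * b + lam * ε n - ε (n + 1) ∈ Λ) :
    (lam - 1) * b ∈ Λ ∧ ∃ N : ℕ, ∀ n ≥ N, ε n = 0 := by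
  set a : ℕ → ℂ := fun n => (lam - 1) * b + lam * ε n - ε (n + 1) with ha
  have hconv' : Filter.Tendsto (fun n => ε (n + 1)) Filter.atTop (nhds 0) :=
    hconv.comp (Filter.tendsto_add_atTop_nat 1)
  have hta : Filter.Tendsto a Filter.atTop (nhds ((lam - 1) * b)) := by
    have : Filter.Tendsto (fun n => (lam - 1) * b + lam * ε n - ε (n + 1))
        Filter.atTop (nhds ((lam - 1) * b + lam * 0 - 0)) :=
      ((tendsto_const_nhds.add (tendsto_const_nhds.mul hconv)).sub hconv')
    simpa using this
  have hL : (lam - 1) * b ∈ Λ :=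
    hΛclosed.mem_of_tendsto hta (Filter.Eventually.of_forall hmem)
  refine ⟨hL, ?_⟩
  -- subtype sequence converges in discrete Λ, so eventually constant
  have hsub : Filter.Tendsto (fun n => (⟨a n, hmem n⟩ : Λ)) Filter.atTop
      (nhds ⟨(lam - 1) * b, hL⟩) := by
    rw [tendsto_subtype_rng]
    exact hta
  have heq : ∀ᶠ n in Filter.atTop, (⟨a n, hmem n⟩ : Λ) = ⟨(lam - 1) * b, hL⟩ := by
    rw [nhds_discrete Λ] at hsub
    exact Filter.tendsto_pure.mp hsub
  obtain ⟨N, hN⟩ := Filter.eventually_atTop.mp heq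
  have hrec : ∀ n ≥ N, ε (n + 1) = lam * ε n := by
    intro n hn
    have := congrArg Subtype.val (hN n hn)
    simp only [ha] at this
    linear_combination -this
  refine ⟨N, fun n hn => ?_⟩
  have hiter : ∀ k : ℕ, ε (n + k) = lam ^ k * ε n := by
    intro k
    induction k with
    | zero => simp
    | succ k ih =>
      have : ε (n + k + 1) = lam * ε (n + k) := hrec (n + k) (le_trans hn (Nat.le_add_right n k))
      rw [show n + (k+1) = n + k + 1 by ring, this, ih, pow_succ]
      ring
  have htend : Filter.Tendsto (fun k => ‖ε (k + n)‖) Filter.atTop (nhds 0) := by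
    have : Filter.Tendsto (fun k => ε (k + n)) Filter.atTop (nhds 0) :=
      hconv.comp (Filter.tendsto_add_atTop_nat n)
    simpa using this.norm
  have hle : ∀ k : ℕ, ‖ε n‖ ≤ ‖ε (k + n)‖ := by
    intro k
    rw [Nat.add_comm k n, hiter k, norm_mul, norm_pow]
    have h1 : (1:ℝ) ≤ ‖lam‖ ^ k := one_le_pow₀ (le_of_lt hlam)
    nlinarith [norm_nonneg (ε n)]
  have : ‖ε n‖ ≤ 0 := ge_of_tendsto' htend hle
  have := le_antisymm this (norm_nonneg _)
  exact norm_eq_zero.mp this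
end

section
/- Let T_d denote the d-th Chebyshev polynomial (satisfying T_d(z + 1/z) = z^d + 1/z^d, suitably normalized), d ≥ 2. Then every multiplier of T_d at a periodic point in ℂ is a rational integer. More precisely, if z₀ is a periodic point of T_d of period p, then (T_d^{∘p})'(z₀) ∈ ℤ. -/
/-- Auxiliary: `exp (x*I) + (exp (x*I))⁻¹ = 2 cos x`. -/
lemma stmt19_exp_pair (x : ℂ) :
    Complex.exp (x * Complex.I) + (Complex.exp (x * Complex.I))⁻¹ = 2 * Complex.cos x := by
  rw [← Complex.exp_neg, ← neg_mul, Complex.exp_mul_I, Complex.exp_mul_I,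
    Complex.cos_neg, Complex.sin_neg]
  ring

/-- the multipliers of the degree-`d` Chebyshev map, normalized by
`T_d(w + w⁻¹) = w^d + w^{−d}`, at its periodic points in `ℂ` are rational integers. -/
theorem stmt19 (d : ℕ) (hd : 2 ≤ d) (T : ℂ → ℂ)
    (hT : ∀ w : ℂ, w ≠ 0 → T (w + w⁻¹) = w ^ d + (w⁻¹) ^ d)
    (p : ℕ) (hp : 1 ≤ p) (z₀ : ℂ) (hper : T^[p] z₀ = z₀) :
    ∃ m : ℤ, deriv (T^[p]) z₀ = (m : ℂ) := by
  set N : ℕ := d ^ p with hNdef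
  -- iterate of the functional equation
  have hiter : ∀ q : ℕ, ∀ w : ℂ, w ≠ 0 → T^[q] (w + w⁻¹) = w ^ (d ^ q) + (w⁻¹) ^ (d ^ q) := by
    intro q
    induction q with
    | zero => intro w hw; simp
    | succ q ih =>
      intro w hw
      rw [Function.iterate_succ_apply, hT w hw, inv_pow w d, ih (w ^ d) (pow_ne_zero d hw),
        inv_pow, ← pow_mul, ← pow_succ', ← inv_pow]
  -- `T^[p]` agrees with the normalized Chebyshev polynomial of degree `N`
  have hg : ∀ z : ℂ, T^[p] z = 2 * (Polynomial.Chebyshev.T ℂ (N : ℤ)).eval (z / 2) := by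
    intro z
    obtain ⟨θ, hθ⟩ := Complex.cos_surjective (z / 2)
    have hz : z = Complex.exp (θ * Complex.I) + (Complex.exp (θ * Complex.I))⁻¹ := by
      rw [stmt19_exp_pair θ, hθ]; ring
    have hwN : (Complex.exp (θ * Complex.I)) ^ N = Complex.exp ((N * θ) * Complex.I) := by
      rw [mul_assoc, Complex.exp_nat_mul]
    calc T^[p] z = (Complex.exp (θ * Complex.I)) ^ N
          + ((Complex.exp (θ * Complex.I))⁻¹) ^ N := by
          rw [hz]; exact hiter p _ (Complex.exp_ne_zero _)
      _ = Complex.exp ((N * θ) * Complex.I) + (Complex.exp ((N * θ) * Complex.I))⁻¹ := by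
          rw [inv_pow, hwN]
      _ = 2 * Complex.cos (N * θ) := stmt19_exp_pair _
      _ = 2 * (Polynomial.Chebyshev.T ℂ (N : ℤ)).eval (z / 2) := by
          rw [← hθ, Polynomial.Chebyshev.T_complex_cos θ (N : ℤ)]; norm_num
  have hfun : T^[p] = fun z => 2 * (Polynomial.Chebyshev.T ℂ (N : ℤ)).eval (z / 2) :=
    funext hg
  -- compute the derivative
  have h1 : HasDerivAt (fun z : ℂ => z / 2) (1 / 2) z₀ := (hasDerivAt_id z₀).div_const 2
  have h2 := ((Polynomial.hasDerivAt (Polynomial.Chebyshev.T ℂ (N : ℤ)) (z₀ / 2)).comp z₀ h1)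
  have h3 : HasDerivAt (fun z : ℂ => 2 * (Polynomial.Chebyshev.T ℂ (N : ℤ)).eval (z / 2))
      ((Polynomial.Chebyshev.T ℂ (N : ℤ)).derivative.eval (z₀ / 2)) z₀ := by
    have := h2.const_mul (2 : ℂ)
    exact this.congr_deriv (by ring)
  have hderiv : deriv (T^[p]) z₀ = (Polynomial.Chebyshev.T ℂ (N : ℤ)).derivative.eval (z₀ / 2) := by
    rw [hfun]; exact h3.deriv
  have hU : deriv (T^[p]) z₀ =
      (N : ℂ) * (Polynomial.Chebyshev.U ℂ ((N : ℤ) - 1)).eval (z₀ / 2) := by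
    rw [hderiv, Polynomial.Chebyshev.T_derivative_eq_U (R := ℂ) (N : ℤ)]
    simp
  -- parametrize `z₀`
  obtain ⟨θ, hθ⟩ := Complex.cos_surjective (z₀ / 2)
  have hfix : Complex.cos ((N : ℂ) * θ) = Complex.cos θ := by
    have := hg z₀
    rw [hper, ← hθ, Polynomial.Chebyshev.T_complex_cos θ (N : ℤ)] at this
    have h2 : (2 : ℂ) * Complex.cos θ = 2 * Complex.cos (((N : ℤ) : ℂ) * θ) := by
      rw [← this, hθ]; ring
    have := mul_left_cancel₀ (two_ne_zero) h2
    rw [this]; norm_num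
  have hUval : (Polynomial.Chebyshev.U ℂ ((N : ℤ) - 1)).eval (Complex.cos θ) * Complex.sin θ
      = Complex.sin ((N : ℂ) * θ) := by
    have := Polynomial.Chebyshev.U_complex_cos θ ((N : ℤ) - 1)
    rw [this]; norm_num
  rw [hU, ← hθ]
  by_cases hs : Complex.sin θ = 0
  · -- endpoint case: cos θ = ±1, integer evaluation point
    have hsq : (Complex.cos θ - 1) * (Complex.cos θ + 1) = 0 := by
      have := Complex.sin_sq_add_cos_sq θ
      rw [hs] at this
      linear_combination this
    have key : ∀ r : ℤ, (((Polynomial.Chebyshev.U ℤ ((N : ℤ) - 1)).eval r : ℤ) : ℂ)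
        = (Polynomial.Chebyshev.U ℂ ((N : ℤ) - 1)).eval ((r : ℤ) : ℂ) := by
      intro r
      simpa using Polynomial.Chebyshev.algebraMap_eval_U (R := ℤ) (R' := ℂ) r ((N : ℤ) - 1)
    rcases mul_eq_zero.mp hsq with h | h
    · have hc : Complex.cos θ = ((1 : ℤ) : ℂ) := by push_cast; linear_combination h
      refine ⟨N * (Polynomial.Chebyshev.U ℤ ((N : ℤ) - 1)).eval 1, ?_⟩
      rw [hc, ← key 1]
      push_cast
      ring
    · have hc : Complex.cos θ = ((-1 : ℤ) : ℂ) := by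
        push_cast
        linear_combination h
      refine ⟨N * (Polynomial.Chebyshev.U ℤ ((N : ℤ) - 1)).eval (-1), ?_⟩
      rw [hc, ← key (-1)]
      push_cast
      ring
  · -- generic case: multiplier is ±N
    have hsin2 : (Complex.sin ((N : ℂ) * θ) - Complex.sin θ)
        * (Complex.sin ((N : ℂ) * θ) + Complex.sin θ) = 0 := by
      have a := Complex.sin_sq_add_cos_sq ((N : ℂ) * θ)
      have b := Complex.sin_sq_add_cos_sq θ
      linear_combination a - b - (Complex.cos ((N : ℂ) * θ) + Complex.cos θ) * hfix
    rcases mul_eq_zero.mp hsin2 with h | h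
    · refine ⟨(N : ℤ), ?_⟩
      have hM : (Polynomial.Chebyshev.U ℂ ((N : ℤ) - 1)).eval (Complex.cos θ) = 1 := by
        have h' : (Polynomial.Chebyshev.U ℂ ((N : ℤ) - 1)).eval (Complex.cos θ)
            * Complex.sin θ = 1 * Complex.sin θ := by
          rw [hUval, one_mul]; linear_combination h
        exact mul_right_cancel₀ hs h'
      rw [hM]; push_cast; ring
    · refine ⟨-(N : ℤ), ?_⟩
      have hM : (Polynomial.Chebyshev.U ℂ ((N : ℤ) - 1)).eval (Complex.cos θ) = -1 := by
        have h' : (Polynomial.Chebyshev.U ℂ ((N : ℤ) - 1)).eval (Complex.cos θ)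
            * Complex.sin θ = (-1) * Complex.sin θ := by
          rw [hUval]; linear_combination h
        exact mul_right_cancel₀ hs h'
      rw [hM]; push_cast; ring
end
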